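/- The polynomial f(s) = 2s^4 + 2s^3 + 4s^2 + 2s + 3 satisfies λ_2(f) = 3/4 < 1 and λ_3(f) = 1/2 < 1 but is not Hurwitz stable; hence the inclusion of the stable polynomials of degree 4 in the class {λ_i < 1} is proper. -/

import Mathlib

/-- A real polynomial is Hurwitz stable if all its complex zeros have negative real parts. -/
def HurwitzStable (f : Polynomial ℝ) : Prop :=
  ∀ z : ℂ, Polynomial.aeval z f = 0 → z.re < 0

open Polynomial Complex

private lemma prodle (t : Multiset ℂ) (G H : ℂ → ℝ) (h : ∀ z ∈ t, 0 ≤ G z ∧ G z ≤ H z) :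
    (t.map G).prod ≤ (t.map H).prod := by
  induction t using Multiset.induction with
  | empty => simp
  | cons a s ih =>
    simp only [Multiset.map_cons, Multiset.prod_cons]
    have ha := h a (Multiset.mem_cons_self a s)
    have hs : ∀ z ∈ s, 0 ≤ G z ∧ G z ≤ H z := fun z hz => h z (Multiset.mem_cons_of_mem hz)
    have h1 : (0:ℝ) ≤ (s.map G).prod := Multiset.prod_nonneg (by
      intro x hx; obtain ⟨z, hz, rfl⟩ := Multiset.mem_map.mp hx; exact (hs z hz).1)
    exact mul_le_mul ha.2 (ih hs) h1 (le_trans ha.1 ha.2)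

theorem example_W4_not_stable :
    ((3 : ℝ) * 2) / (4 * 2) < 1 ∧ ((2 : ℝ) * 2) / (2 * 4) < 1 ∧
      ¬ HurwitzStable (Polynomial.C 3 + Polynomial.C 2 * Polynomial.X +
          Polynomial.C 4 * Polynomial.X ^ 2 + Polynomial.C 2 * Polynomial.X ^ 3 +
          Polynomial.C 2 * Polynomial.X ^ 4) := by
  refine ⟨by norm_num, by norm_num, ?_⟩
  intro hstab
  set f : Polynomial ℝ := Polynomial.C 3 + Polynomial.C 2 * Polynomial.X +
      Polynomial.C 4 * Polynomial.X ^ 2 + Polynomial.C 2 * Polynomial.X ^ 3 +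
      Polynomial.C 2 * Polynomial.X ^ 4 with hf
  set F : Polynomial ℂ := f.map (algebraMap ℝ ℂ) with hF
  have hFeval : ∀ z : ℂ, F.eval z = 3 + 2*z + 4*z^2 + 2*z^3 + 2*z^4 := by
    intro z
    simp [hF, hf, Polynomial.eval_map, Polynomial.eval₂_add, Polynomial.eval₂_mul]
  have hFne : F ≠ 0 := by
    intro h
    have := hFeval 0
    rw [h] at this
    simp at this
  -- all roots of F have negative real part
  have hroots : ∀ z ∈ F.roots, z.re < 0 := by
    intro z hz
    have : F.eval z = 0 := (Polynomial.mem_roots hFne).mp hz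
    apply hstab z
    rw [Polynomial.aeval_def, ← Polynomial.eval_map]
    exact this
  -- factorization
  have hsplit : F = Polynomial.C F.leadingCoeff *
      (F.roots.map (fun a => Polynomial.X - Polynomial.C a)).prod :=
    (IsAlgClosed.splits F).eq_prod_roots
  set s0 : ℂ := 1/6 + Complex.I with hs0
  set s1 : ℂ := -(1/6) + Complex.I with hs1
  have key : ‖F.eval s1‖ ≤ ‖F.eval s0‖ := by
    have e0 : ‖F.eval s0‖ =
        ‖F.leadingCoeff‖ * (F.roots.map (fun z => ‖s0 - z‖)).prod := by
      conv_lhs => rw [hsplit]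
      rw [Polynomial.eval_mul, Polynomial.eval_C, norm_mul, Polynomial.eval_multiset_prod,
        Multiset.map_map, show ∀ m : Multiset ℂ, ‖m.prod‖ = (m.map (‖·‖)).prod from fun m => map_multiset_prod normHom m, Multiset.map_map]
      simp
    have e1 : ‖F.eval s1‖ =
        ‖F.leadingCoeff‖ * (F.roots.map (fun z => ‖s1 - z‖)).prod := by
      conv_lhs => rw [hsplit]
      rw [Polynomial.eval_mul, Polynomial.eval_C, norm_mul, Polynomial.eval_multiset_prod,
        Multiset.map_map, show ∀ m : Multiset ℂ, ‖m.prod‖ = (m.map (‖·‖)).prod from fun m => map_multiset_prod normHom m, Multiset.map_map]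
      simp
    rw [e0, e1]
    apply mul_le_mul_of_nonneg_left _ (norm_nonneg _)
    apply prodle
    intro z hz
    refine ⟨norm_nonneg _, ?_⟩
    have hzre : z.re < 0 := hroots z hz
    have : Complex.normSq (s1 - z) ≤ Complex.normSq (s0 - z) := by
      simp only [Complex.normSq_apply, Complex.sub_re, Complex.sub_im, hs0, hs1]
      simp [Complex.add_re, Complex.add_im]
      nlinarith [hzre]
    calc ‖s1 - z‖ = Real.sqrt (Complex.normSq (s1 - z)) := Complex.norm_def _
      _ ≤ Real.sqrt (Complex.normSq (s0 - z)) := Real.sqrt_le_sqrt this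
      _ = ‖s0 - z‖ := (Complex.norm_def _).symm
  -- numeric contradiction
  have hv0 : F.eval s0 = Complex.mk (79/648) (11/54) := by
    rw [hFeval, hs0]
    apply Complex.ext <;>
      simp [Complex.add_re, Complex.add_im, Complex.mul_re, Complex.mul_im, pow_succ] <;> norm_num
  have hv1 : F.eval s1 = Complex.mk (931/648) (7/54) := by
    rw [hFeval, hs1]
    apply Complex.ext <;>
      simp [Complex.add_re, Complex.add_im, Complex.mul_re, Complex.mul_im, pow_succ] <;> norm_num
  rw [hv0, hv1] at key
  have h0 : ‖Complex.mk (79/648) (11/54)‖ < ‖Complex.mk (931/648) (7/54)‖ := by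
    rw [Complex.norm_def, Complex.norm_def]
    apply Real.sqrt_lt_sqrt (Complex.normSq_nonneg _)
    simp [Complex.normSq_apply]
    norm_num
  linarith
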